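/- Let p be a prime, ℤ_p the ring of p-adic integers, and Λ = ℤ_p[[X]] the ring of formal power series (the Iwasawa algebra). For each n ∈ ℕ set ω_n = (1+X)^{p^n} − 1 ∈ Λ. Let M be a finitely generated Λ-module and let t_Λ(M) denote its Λ-torsion submodule. Assume that for every n ∈ ℕ the quotient t_Λ(M)/ω_n·t_Λ(M) is finite. Then the natural maps M → M/ω_n M induce an isomorphism of Λ-modules t_Λ(M) ≅ lim_n t_{ℤ_p}(M/ω_n M), where t_{ℤ_p}(M/ω_n M) denotes the ℤ_p-torsion submodule of M/ω_n M and the inverse limit is taken over the natural projections M/ω_{n+1} M → M/ω_n M. (Lemma 3.3 of the paper, with Γ_n-coinvariants written explicitly as quotients by ω_n.) -/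

import Mathlib

open PowerSeries

noncomputable section

/-- The Iwasawa algebra `Λ = ℤ_p[[X]]`. -/
abbrev IwasawaAlgebra (p : ℕ) [Fact p.Prime] : Type := PowerSeries ℤ_[p]

/-- `ω_n = (1+X)^{p^n} − 1 ∈ Λ`. -/
def omegaN (p : ℕ) [Fact p.Prime] (n : ℕ) : IwasawaAlgebra p :=
  (1 + PowerSeries.X) ^ (p ^ n) - 1

/-- `ω_n` divides `ω_{n+1}`. -/
theorem omegaN_dvd_succ (p : ℕ) [Fact p.Prime] (n : ℕ) :
    omegaN p n ∣ omegaN p (n + 1) := by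
  have h1 : omegaN p (n + 1) =
      ((1 + PowerSeries.X : IwasawaAlgebra p) ^ (p ^ n)) ^ p - 1 ^ p := by
    rw [one_pow, omegaN, ← pow_mul, pow_succ]
  rw [omegaN, h1]
  exact sub_dvd_pow_sub_pow _ _ p

section AuxSection
namespace IwasawaAux

variable (p : ℕ) [Fact p.Prime]

/-- The maximal ideal `(p, X)` of `Λ`. -/
def PI : Ideal (IwasawaAlgebra p) := Ideal.span {(p : IwasawaAlgebra p), PowerSeries.X}

theorem p_ne_zero' : (p : ℤ_[p]) ≠ 0 :=
  Nat.cast_ne_zero.mpr (Fact.out (p := p.Prime)).pos.ne'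

theorem p_cast_eq_C : (p : IwasawaAlgebra p) = PowerSeries.C (R := ℤ_[p]) (p : ℤ_[p]) :=
  (map_natCast (PowerSeries.C (R := ℤ_[p])) p).symm

theorem p_ne_zero : (p : IwasawaAlgebra p) ≠ 0 := by
  intro h
  have := congrArg (PowerSeries.constantCoeff (R := ℤ_[p])) h
  rw [map_natCast, map_zero] at this
  exact p_ne_zero' p this

/-- Multiplicative stability of the coefficient-divisibility bound. -/
theorem coeff_mul_dvd {k : ℕ} {m : IwasawaAlgebra p}
    (hm : ∀ v, (p : ℤ_[p]) ^ (k - v) ∣ PowerSeries.coeff (R := ℤ_[p]) v m)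
    (a : IwasawaAlgebra p) (j : ℕ) :
    (p : ℤ_[p]) ^ (k - j) ∣ PowerSeries.coeff (R := ℤ_[p]) j (a * m) := by
  rw [PowerSeries.coeff_mul]
  refine Finset.dvd_sum ?_
  rintro ⟨u, v⟩ huv
  rw [Finset.HasAntidiagonal.mem_antidiagonal] at huv
  have hv : v ≤ j := by omega
  exact Dvd.dvd.mul_left ((pow_dvd_pow _ (by omega)).trans (hm v)) _

theorem pow_dvd_coeff_of_mem_PI_pow : ∀ {k : ℕ} {f : IwasawaAlgebra p}, f ∈ PI p ^ k →
    ∀ j, (p : ℤ_[p]) ^ (k - j) ∣ PowerSeries.coeff (R := ℤ_[p]) j f := by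
  intro k
  induction k with
  | zero => intro f _ j; simpa using one_dvd _
  | succ k ih =>
    intro f hf j
    rw [pow_succ] at hf
    refine Submodule.mul_induction_on hf (fun m hmem n hn => ?_) (fun x y hx hy => ?_)
    case _ =>
      rw [PI, Ideal.mem_span_pair] at hn
      obtain ⟨a, b, hab⟩ := hn
      have h1 : m * (a * (p : IwasawaAlgebra p)) = (p:IwasawaAlgebra p) * (a * m) := by ring
      have h2 : m * (b * PowerSeries.X) = PowerSeries.X * (b * m) := by ring
      have hmn : m * n = (p:IwasawaAlgebra p) * (a * m) + PowerSeries.X * (b * m) := by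
        rw [← hab]; ring
      rw [hmn, map_add]
      refine dvd_add ?_ ?_
      · rw [p_cast_eq_C, PowerSeries.coeff_C_mul]
        rcases Nat.lt_or_ge j (k+1) with hj | hj
        · have : (p:ℤ_[p]) ^ (k + 1 - j) = (p:ℤ_[p]) * (p:ℤ_[p]) ^ (k - j) := by
            rw [← pow_succ']
            congr 1
            omega
          rw [this]
          exact mul_dvd_mul_left _ (coeff_mul_dvd p (ih hmem) a j)
        · have : k + 1 - j = 0 := by omega
          rw [this, pow_zero]; exact one_dvd _
      · cases j with
        | zero =>
          have : PowerSeries.coeff (R := ℤ_[p]) 0 (PowerSeries.X * (b * m)) = 0 := by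
            rw [PowerSeries.coeff_zero_eq_constantCoeff, map_mul, PowerSeries.constantCoeff_X,
              zero_mul]
          rw [this]
          exact dvd_zero _
        | succ i =>
          rw [PowerSeries.coeff_succ_X_mul]
          exact (pow_dvd_pow _ (by omega)).trans (coeff_mul_dvd p (ih hmem) b i)
    case _ => rw [map_add]; exact dvd_add hx hy

theorem one_add_pow_sub_one {A : Type*} [CommRing A] (a : A) (q : ℕ) :
    ∃ r, (1 + a) ^ q - 1 = a * (q + a * r) := by
  induction q with
  | zero => exact ⟨0, by simp⟩
  | succ q ih =>
    obtain ⟨r, hr⟩ := ih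
    refine ⟨r + q + a * r, ?_⟩
    have h2 : (1+a)^(q+1) = (1+a)^q * (1+a) := pow_succ _ _
    have h3 : (1+a)^q = 1 + a*(q+a*r) := by linear_combination hr
    rw [h2, h3]
    push_cast
    ring

/-- The factor `ρ_n` with `ω_{n+1} = ω_n ρ_n`. -/
def rho (n : ℕ) : IwasawaAlgebra p :=
  (p : IwasawaAlgebra p) +
    omegaN p n * Classical.choose (one_add_pow_sub_one (omegaN p n) p)

theorem omega_succ_eq (n : ℕ) : omegaN p (n + 1) = omegaN p n * rho p n := by
  have h0 : (1 + PowerSeries.X : IwasawaAlgebra p) ^ (p ^ n) = 1 + omegaN p n := by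
    rw [omegaN]; ring
  have h1 : omegaN p (n+1) = (1 + omegaN p n) ^ p - 1 := by
    rw [omegaN, ← h0, ← pow_mul, pow_succ]
  rw [h1, Classical.choose_spec (one_add_pow_sub_one (omegaN p n) p), rho]

theorem omegaN_mem_PI (n : ℕ) : omegaN p n ∈ PI p := by
  have : (PowerSeries.X : IwasawaAlgebra p) ∣ omegaN p n := by
    rw [PowerSeries.X_dvd_iff, omegaN, map_sub, map_pow, map_add, map_one,
      PowerSeries.constantCoeff_X]
    norm_num
  obtain ⟨c, hc⟩ := this
  rw [hc, PI]
  exact Ideal.mul_mem_right _ _ (Ideal.subset_span (by simp))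

theorem rho_mem_PI (n : ℕ) : rho p n ∈ PI p := by
  refine Ideal.add_mem _ (Ideal.subset_span (by simp)) ?_
  exact Ideal.mul_mem_right _ _ (omegaN_mem_PI p n)

theorem omegaN_mem_PI_pow (n : ℕ) : omegaN p n ∈ PI p ^ (n + 1) := by
  induction n with
  | zero =>
    have : omegaN p 0 = PowerSeries.X := by simp [omegaN]
    rw [this, pow_one, PI]
    exact Ideal.subset_span (by simp)
  | succ n ih =>
    rw [omega_succ_eq, pow_succ]
    exact Ideal.mul_mem_mul ih (rho_mem_PI p n)

/-- The product `d_{n,k} = ρ_n ρ_{n+1} ⋯ ρ_{n+k-1}`, so that `ω_{n+k} = ω_n d_{n,k}`. -/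
def dfac (n k : ℕ) : IwasawaAlgebra p := ∏ j ∈ Finset.range k, rho p (n + j)

theorem dfac_zero (n : ℕ) : dfac p n 0 = 1 := by simp [dfac]

theorem dfac_succ (n k : ℕ) : dfac p n (k + 1) = dfac p n k * rho p (n + k) :=
  Finset.prod_range_succ _ _

theorem dfac_succ' (n k : ℕ) : dfac p n (k + 1) = rho p n * dfac p (n + 1) k := by
  rw [dfac, Finset.prod_range_succ', mul_comm]
  congr 1
  refine Finset.prod_congr rfl fun j _ => ?_
  have h : n + (j + 1) = n + 1 + j := by omega
  rw [h]

theorem omega_mul_dfac (n k : ℕ) : omegaN p (n + k) = omegaN p n * dfac p n k := by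
  induction k with
  | zero => rw [dfac_zero, mul_one, Nat.add_zero]
  | succ k ih =>
    have : n + (k+1) = (n + k) + 1 := rfl
    rw [this, omega_succ_eq, ih, dfac_succ, mul_assoc]

theorem dfac_mem (n k : ℕ) : dfac p n k ∈ PI p ^ k := by
  induction k with
  | zero => rw [dfac_zero, pow_zero, Ideal.one_eq_top]; trivial
  | succ k ih =>
    rw [dfac_succ, pow_succ]
    exact Ideal.mul_mem_mul ih (rho_mem_PI p (n + k))

theorem PI_ne_top : PI p ≠ ⊤ := by
  intro h
  have h1 : (1 : IwasawaAlgebra p) ∈ PI p := h ▸ Submodule.mem_top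
  have hker : PI p ≤ RingHom.ker ((PadicInt.toZMod).comp (PowerSeries.constantCoeff (R := ℤ_[p]))) := by
    rw [PI, Ideal.span_le]
    rintro x (rfl | rfl)
    · simp [RingHom.mem_ker]
    · simp [RingHom.mem_ker]
  have := hker h1
  rw [RingHom.mem_ker] at this
  simp at this


/-- Reduction mod `p`, `Λ → 𝔽_p[[X]]`. -/
def redp : IwasawaAlgebra p →+* PowerSeries (ZMod p) := PowerSeries.map (PadicInt.toZMod)

theorem toZMod_eq_zero_iff (a : ℤ_[p]) : PadicInt.toZMod a = 0 ↔ (p : ℤ_[p]) ∣ a := by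
  rw [← RingHom.mem_ker, PadicInt.ker_toZMod, PadicInt.maximalIdeal_eq_span_p,
    Ideal.mem_span_singleton]

theorem p_dvd_iff_forall (f : IwasawaAlgebra p) :
    (p : IwasawaAlgebra p) ∣ f ↔ ∀ j, (p : ℤ_[p]) ∣ PowerSeries.coeff (R := ℤ_[p]) j f := by
  constructor
  · rintro ⟨g, rfl⟩ j
    rw [p_cast_eq_C, PowerSeries.coeff_C_mul]
    exact Dvd.intro _ rfl
  · intro h
    refine ⟨PowerSeries.mk fun j => Classical.choose (h j), ?_⟩
    ext j
    rw [p_cast_eq_C, PowerSeries.coeff_C_mul, PowerSeries.coeff_mk]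
    exact Classical.choose_spec (h j)

theorem redp_eq_zero_iff (f : IwasawaAlgebra p) :
    redp p f = 0 ↔ (p : IwasawaAlgebra p) ∣ f := by
  rw [p_dvd_iff_forall]
  constructor
  · intro h j
    have := congrArg (PowerSeries.coeff (R := ZMod p) j) h
    rw [redp, PowerSeries.coeff_map, map_zero] at this
    exact (toZMod_eq_zero_iff p _).mp this
  · intro h
    ext j
    rw [redp, PowerSeries.coeff_map, map_zero]
    exact (toZMod_eq_zero_iff p _).mpr (h j)

instance : CharP (PowerSeries (ZMod p)) p := by
  constructor
  intro n
  rw [← map_natCast (PowerSeries.C (R := ZMod p)) n]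
  constructor
  · intro h
    have := congrArg (PowerSeries.constantCoeff (R := ZMod p)) h
    rw [PowerSeries.constantCoeff_C, map_zero] at this
    exact (ZMod.natCast_eq_zero_iff n p).mp this
  · intro h
    rw [(ZMod.natCast_eq_zero_iff n p).mpr h, map_zero]

theorem redp_omegaN (n : ℕ) :
    redp p (omegaN p n) = PowerSeries.X ^ (p ^ n) := by
  rw [omegaN, redp, map_sub, map_pow, map_add, map_one, PowerSeries.map_X,
    add_pow_char_pow, one_pow, add_sub_cancel_left]

theorem omegaN_dvd_of_p_pow_mul (n : ℕ) :
    ∀ (e : ℕ) (g : IwasawaAlgebra p),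
      omegaN p n ∣ (p : IwasawaAlgebra p) ^ e * g → omegaN p n ∣ g := by
  intro e
  induction e with
  | zero => intro g h; rwa [pow_zero, one_mul] at h
  | succ e ih =>
    intro g h
    obtain ⟨t, ht⟩ := h
    have h2 : (0 : PowerSeries (ZMod p)) = PowerSeries.X ^ (p ^ n) * redp p t := by
      have := congrArg (redp p) ht
      rw [map_mul, map_mul, map_pow, map_natCast, CharP.cast_eq_zero,
        zero_pow (Nat.succ_ne_zero e), zero_mul, redp_omegaN] at this
      exact this
    have h3 : redp p t = 0 := by
      rcases mul_eq_zero.mp h2.symm with h | h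
      · exact absurd h (pow_ne_zero _ PowerSeries.X_ne_zero)
      · exact h
    obtain ⟨t', rfl⟩ := (redp_eq_zero_iff p t).mp h3
    have h4 : (p:IwasawaAlgebra p) * ((p : IwasawaAlgebra p) ^ e * g) =
        (p:IwasawaAlgebra p) * (omegaN p n * t') := by
      rw [← mul_assoc, ← pow_succ']
      rw [ht]
      ring
    exact ih g ⟨t', mul_left_cancel₀ (p_ne_zero p) h4⟩

theorem eq_zero_of_forall_omegaN_dvd (g : IwasawaAlgebra p)
    (h : ∀ n, omegaN p n ∣ g) : g = 0 := by
  have key : ∀ (k : ℕ) (f : IwasawaAlgebra p), (∀ n, omegaN p n ∣ f) →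
      (p : IwasawaAlgebra p) ^ k ∣ f := by
    intro k
    induction k with
    | zero => intro f _; exact ⟨f, by rw [pow_zero, one_mul]⟩
    | succ k ih =>
      intro f hf
      have hred : redp p f = 0 := by
        ext j
        have hx : PowerSeries.X ^ (p ^ (j+1)) ∣ redp p f := by
          obtain ⟨t, ht⟩ := hf (j+1)
          exact ⟨redp p t, by rw [ht, map_mul, redp_omegaN]⟩
        rw [map_zero]
        refine PowerSeries.X_pow_dvd_iff.mp hx j ?_
        calc j < p ^ j := Nat.lt_pow_self (Fact.out (p := p.Prime)).one_lt
        _ ≤ p ^ (j+1) := Nat.pow_le_pow_right (Fact.out (p := p.Prime)).pos (by omega)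
      obtain ⟨f', rfl⟩ := (redp_eq_zero_iff p f).mp hred
      have hf' : ∀ n, omegaN p n ∣ f' := by
        intro n
        refine omegaN_dvd_of_p_pow_mul p n 1 f' ?_
        rw [pow_one]
        exact hf n
      obtain ⟨t, ht⟩ := ih f' hf'
      exact ⟨t, by rw [ht, pow_succ', mul_assoc]⟩
  ext j
  rw [map_zero]
  have hdvd : ∀ k : ℕ, (p : ℤ_[p]) ^ k ∣ PowerSeries.coeff (R := ℤ_[p]) j g := by
    intro k
    obtain ⟨t, ht⟩ := key k g h
    rw [ht]
    have : (p : IwasawaAlgebra p) ^ k = PowerSeries.C (R := ℤ_[p]) ((p:ℤ_[p])^k) := by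
      rw [p_cast_eq_C, map_pow]
    rw [this, PowerSeries.coeff_C_mul]
    exact Dvd.intro _ rfl
  have hnorm : ∀ k : ℕ, ‖PowerSeries.coeff (R := ℤ_[p]) j g‖ ≤ (p:ℝ) ^ (-(k:ℤ)) := by
    intro k
    rw [PadicInt.norm_le_pow_iff_mem_span_pow, Ideal.mem_span_singleton]
    exact hdvd k
  have hzero : ‖PowerSeries.coeff (R := ℤ_[p]) j g‖ ≤ 0 := by
    have hp1 : (1:ℝ) < (p:ℝ) := by
      exact_mod_cast (Fact.out (p := p.Prime)).one_lt
    have htend : Filter.Tendsto (fun k : ℕ => (p:ℝ) ^ (-(k:ℤ))) Filter.atTop (nhds 0) := by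
      simpa [zpow_neg, ← inv_zpow, zpow_natCast] using
        tendsto_pow_atTop_nhds_zero_of_lt_one (by positivity : (0:ℝ) ≤ (p:ℝ)⁻¹)
          (by rw [inv_lt_one_iff₀]; right; exact hp1)
    exact ge_of_tendsto htend (Filter.Eventually.of_forall hnorm)
  have := le_antisymm hzero (norm_nonneg _)
  exact norm_eq_zero.mp this


/-- The `ℤ_p`-submodule of elements of `I` of `X`-order at least `n`. -/
def KK (I : Ideal (IwasawaAlgebra p)) (n : ℕ) : Submodule ℤ_[p] (IwasawaAlgebra p) where
  carrier := {f | f ∈ I ∧ ∀ j < n, PowerSeries.coeff (R := ℤ_[p]) j f = 0}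
  zero_mem' := ⟨I.zero_mem, fun j _ => map_zero _⟩
  add_mem' := by
    rintro f g ⟨hfI, hf⟩ ⟨hgI, hg⟩
    exact ⟨I.add_mem hfI hgI, fun j hj => by rw [map_add, hf j hj, hg j hj, add_zero]⟩
  smul_mem' := by
    rintro a f ⟨hfI, hf⟩
    refine ⟨?_, fun j hj => by rw [PowerSeries.coeff_smul, hf j hj, smul_zero]⟩
    rw [PowerSeries.smul_eq_C_mul]
    exact I.mul_mem_left _ hfI

/-- The ideal of leading coefficients at level `n`. -/
def JJ (I : Ideal (IwasawaAlgebra p)) (n : ℕ) : Ideal ℤ_[p] :=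
  Submodule.map (PowerSeries.coeff (R := ℤ_[p]) n) (KK p I n)

theorem JJ_mono (I : Ideal (IwasawaAlgebra p)) (n : ℕ) : JJ p I n ≤ JJ p I (n + 1) := by
  rintro x ⟨f, ⟨hfI, hf⟩, rfl⟩
  refine ⟨PowerSeries.X * f, ⟨I.mul_mem_left _ hfI, ?_⟩, PowerSeries.coeff_succ_X_mul n f⟩
  intro j hj
  cases j with
  | zero =>
    rw [PowerSeries.coeff_zero_eq_constantCoeff, map_mul, PowerSeries.constantCoeff_X, zero_mul]
  | succ i => rw [PowerSeries.coeff_succ_X_mul]; exact hf i (by omega)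

/-- Every element of `I` vanishing in degrees `< N` is a multiple of a fixed element `fN`
provided the leading-coefficient ideals have stabilized at level `N`. -/
theorem stage2 (I : Ideal (IwasawaAlgebra p)) (N : ℕ) (c : ℤ_[p]) (fN : IwasawaAlgebra p)
    (hfN : fN ∈ KK p I N) (hcoeff : PowerSeries.coeff (R := ℤ_[p]) N fN = c)
    (hstab : ∀ m, N ≤ m → JJ p I m = Ideal.span {c}) :
    ∀ g, g ∈ KK p I N → g ∈ Ideal.span {fN} := by
  intro g hg
  classical
  let sel : IwasawaAlgebra p → ℕ → ℤ_[p] := fun x m =>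
    if h : ∃ t, PowerSeries.coeff (R := ℤ_[p]) m x = t * c then h.choose else 0
  let gs : ℕ → IwasawaAlgebra p := fun k => Nat.rec g
    (fun k gk => gk - PowerSeries.C (R := ℤ_[p]) (sel gk (N + k)) * PowerSeries.X ^ k * fN) k
  have hgs_succ : ∀ k, gs (k+1) =
      gs k - PowerSeries.C (R := ℤ_[p]) (sel (gs k) (N + k)) * PowerSeries.X ^ k * fN := fun k => rfl
  -- invariant
  have INV : ∀ k, gs k ∈ KK p I (N + k) := by
    intro k
    induction k with
    | zero => exact hg
    | succ k ih =>
      obtain ⟨ihI, ihc⟩ := ih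
      have hmem : PowerSeries.coeff (R := ℤ_[p]) (N + k) (gs k) ∈ Ideal.span {c} := by
        rw [← hstab (N+k) (by omega)]
        exact ⟨gs k, ⟨ihI, ihc⟩, rfl⟩
      have hex : ∃ t, PowerSeries.coeff (R := ℤ_[p]) (N + k) (gs k) = t * c := by
        obtain ⟨t, ht⟩ := Ideal.mem_span_singleton.mp hmem
        exact ⟨t, by rw [ht, mul_comm]⟩
      have hsel : PowerSeries.coeff (R := ℤ_[p]) (N + k) (gs k) = sel (gs k) (N + k) * c := by
        simp only [sel, dif_pos hex]
        exact hex.choose_spec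
      constructor
      · rw [hgs_succ]
        exact Submodule.sub_mem _ ihI (I.mul_mem_left _ hfN.1)
      · intro j hj
        rw [hgs_succ, map_sub, mul_assoc, PowerSeries.coeff_C_mul]
        rcases Nat.lt_or_ge j k with hjk | hjk
        · have h1 : PowerSeries.coeff (R := ℤ_[p]) j (PowerSeries.X ^ k * fN) = 0 :=
            PowerSeries.X_pow_dvd_iff.mp (Dvd.intro _ rfl) j hjk
          rw [h1, mul_zero, sub_zero]
          exact ihc j (by omega)
        · obtain ⟨d, rfl⟩ : ∃ d, j = d + k := ⟨j - k, by omega⟩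
          rw [PowerSeries.coeff_X_pow_mul]
          rcases Nat.lt_or_ge d N with hdN | hdN
          · rw [hfN.2 d hdN, mul_zero, sub_zero]
            exact ihc _ (by omega)
          · have hdn : d = N := by omega
            rw [hdn, hcoeff, hsel, sub_self]
  -- the quotient series
  let h : IwasawaAlgebra p := PowerSeries.mk fun k => sel (gs k) (N + k)
  have key : g = h * fN := by
    ext j
    have htel : gs 0 - gs (j+1) =
        ∑ k ∈ Finset.range (j+1),
          PowerSeries.C (R := ℤ_[p]) (sel (gs k) (N + k)) * PowerSeries.X ^ k * fN := by
      rw [← Finset.sum_range_sub' gs (j+1)]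
      exact Finset.sum_congr rfl fun k _ => by rw [hgs_succ]; ring
    have hzero : PowerSeries.coeff (R := ℤ_[p]) j (gs (j+1)) = 0 := (INV (j+1)).2 j (by omega)
    have hg0 : gs 0 = g := rfl
    have : PowerSeries.coeff (R := ℤ_[p]) j g =
        PowerSeries.coeff (R := ℤ_[p]) j (∑ k ∈ Finset.range (j+1),
          PowerSeries.C (R := ℤ_[p]) (sel (gs k) (N + k)) * PowerSeries.X ^ k * fN) := by
      rw [← htel, map_sub, hg0, hzero, sub_zero]
    rw [this, map_sum, PowerSeries.coeff_mul,
      Finset.Nat.sum_antidiagonal_eq_sum_range_succ_mk]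
    refine Finset.sum_congr rfl fun k hk => ?_
    rw [Finset.mem_range] at hk
    have hkj : k ≤ j := by omega
    rw [mul_assoc, PowerSeries.coeff_C_mul]
    obtain ⟨d, rfl⟩ : ∃ d, j = d + k := ⟨j - k, by omega⟩
    rw [PowerSeries.coeff_X_pow_mul, PowerSeries.coeff_mk]
    have : d + k - k = d := by omega
    rw [this]
  rw [key, Ideal.mem_span_singleton]
  exact Dvd.intro_left _ rfl

theorem ideal_fg (I : Ideal (IwasawaAlgebra p)) : I.FG := by
  classical
  -- stabilization of the chain of leading-coefficient ideals
  have hmon : Monotone (JJ p I) := monotone_nat_of_le_succ (JJ_mono p I)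
  obtain ⟨N, hN⟩ := (monotone_stabilizes_iff_noetherian.mpr inferInstance) ⟨JJ p I, hmon⟩
  -- generators and witnesses at each level
  have hex : ∀ n, ∃ f, f ∈ KK p I n ∧
      PowerSeries.coeff (R := ℤ_[p]) n f = Submodule.IsPrincipal.generator (JJ p I n) := by
    intro n
    obtain ⟨f, hf, hco⟩ := Submodule.IsPrincipal.generator_mem (JJ p I n)
    exact ⟨f, hf, hco⟩
  let fsel : ℕ → IwasawaAlgebra p := fun n => (hex n).choose
  have hfsel : ∀ n, fsel n ∈ KK p I n ∧
      PowerSeries.coeff (R := ℤ_[p]) n (fsel n) = Submodule.IsPrincipal.generator (JJ p I n) :=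
    fun n => (hex n).choose_spec
  let SS : Finset (IwasawaAlgebra p) := (Finset.range (N+1)).image fsel
  have hSSmem : ∀ n ≤ N, fsel n ∈ SS := fun n hn =>
    Finset.mem_image.mpr ⟨n, Finset.mem_range.mpr (by omega), rfl⟩
  have claim1 : ∀ Δ g, g ∈ KK p I (N - Δ) → g ∈ Ideal.span (SS : Set (IwasawaAlgebra p)) := by
    intro Δ
    induction Δ with
    | zero =>
      intro g hg
      have h2 := stage2 p I N (Submodule.IsPrincipal.generator (JJ p I N)) (fsel N)
        (hfsel N).1 (hfsel N).2
        (fun m hm => by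
          rw [← show JJ p I N = JJ p I m from hN m hm, Ideal.span_singleton_generator])
        g (by simpa using hg)
      refine Ideal.span_mono ?_ h2
      simp only [Set.singleton_subset_iff, Finset.coe_insert, Set.mem_insert_iff]
      exact_mod_cast hSSmem N le_rfl
    | succ Δ ih =>
      intro g hg
      rcases le_or_gt N Δ with hND | hND
      · exact ih g (by rwa [Nat.sub_eq_zero_of_le hND, ← Nat.sub_eq_zero_of_le (by omega : N ≤ Δ + 1)])
      · set n := N - (Δ + 1) with hn
        have hn1 : n + 1 = N - Δ := by omega
        have hnN : n ≤ N := by omega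
        have hmem : PowerSeries.coeff (R := ℤ_[p]) n g ∈ JJ p I n := ⟨g, hg, rfl⟩
        rw [← Ideal.span_singleton_generator (JJ p I n)] at hmem
        obtain ⟨t, ht⟩ := Ideal.mem_span_singleton.mp hmem
        set g' := g - PowerSeries.C (R := ℤ_[p]) t * fsel n with hg'
        have hg'mem : g' ∈ KK p I (n + 1) := by
          constructor
          · exact Submodule.sub_mem _ hg.1 (I.mul_mem_left _ (hfsel n).1.1)
          · intro j hj
            rw [hg', map_sub, PowerSeries.coeff_C_mul]
            rcases Nat.lt_or_ge j n with hjn | hjn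
            · rw [hg.2 j hjn, (hfsel n).1.2 j hjn, mul_zero, sub_zero]
            · have hjn' : j = n := by omega
              rw [hjn', (hfsel n).2, ht, mul_comm, sub_self]
        have := ih g' (by rwa [hn1] at hg'mem)
        have hgeq : g = g' + PowerSeries.C (R := ℤ_[p]) t * fsel n := by rw [hg']; ring
        rw [hgeq]
        exact Ideal.add_mem _ this
          (Ideal.mul_mem_left _ _ (Ideal.subset_span (by exact_mod_cast hSSmem n hnN)))
  refine ⟨SS, le_antisymm ?_ ?_⟩
  · rw [Ideal.span_le]
    intro x hx
    obtain ⟨n, _, rfl⟩ := Finset.mem_image.mp (by exact_mod_cast hx)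
    exact (hfsel n).1.1
  · intro g hg
    refine claim1 N g ?_
    rw [Nat.sub_self]
    exact ⟨hg, fun j hj => absurd hj (Nat.not_lt_zero j)⟩

instance : IsNoetherianRing (IwasawaAlgebra p) :=
  (isNoetherianRing_iff_ideal_fg _).mpr (ideal_fg p)


section Sums

theorem summable_coeff_of_mem_pow {F : ℕ → IwasawaAlgebra p} (hF : ∀ k, F k ∈ PI p ^ k)
    (j : ℕ) : Summable fun k => PowerSeries.coeff (R := ℤ_[p]) j (F k) := by
  have hp1 : (1:ℝ) < (p:ℝ) := by exact_mod_cast (Fact.out (p := p.Prime)).one_lt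
  refine NonarchimedeanAddGroup.summable_of_tendsto_cofinite_zero ?_
  rw [Nat.cofinite_eq_atTop]
  refine squeeze_zero_norm (a := fun k => ((p:ℝ)⁻¹) ^ (k - j)) (fun k => ?_) ?_
  · have hdvd := pow_dvd_coeff_of_mem_PI_pow p (hF k) j
    have := (PadicInt.norm_le_pow_iff_mem_span_pow (PowerSeries.coeff (R := ℤ_[p]) j (F k))
      (k - j)).mpr (Ideal.mem_span_singleton.mpr hdvd)
    calc ‖PowerSeries.coeff (R := ℤ_[p]) j (F k)‖ ≤ (p:ℝ) ^ (-((k - j : ℕ):ℤ)) := this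
    _ = ((p:ℝ)⁻¹) ^ (k - j) := by
        rw [zpow_neg, ← inv_zpow, zpow_natCast]
  · exact (tendsto_pow_atTop_nhds_zero_of_lt_one (by positivity)
      (by rw [inv_lt_one_iff₀]; right; exact hp1)).comp (Filter.tendsto_sub_atTop_nat j)

/-- The sum `∑_{k≥0} F k`, defined coefficientwise. -/
def SumSeries (F : ℕ → IwasawaAlgebra p) : IwasawaAlgebra p :=
  PowerSeries.mk fun j => ∑' k, PowerSeries.coeff (R := ℤ_[p]) j (F k)

set_option maxHeartbeats 1000000 in
theorem mul_SumSeries (a : IwasawaAlgebra p) (F : ℕ → IwasawaAlgebra p)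
    (hF : ∀ j, Summable fun k => PowerSeries.coeff (R := ℤ_[p]) j (F k)) :
    a * SumSeries p F = SumSeries p (fun k => a * F k) := by
  ext j
  rw [SumSeries, SumSeries, PowerSeries.coeff_mk, PowerSeries.coeff_mul]
  have step1 : ∀ uv : ℕ × ℕ, uv ∈ Finset.HasAntidiagonal.antidiagonal j →
      PowerSeries.coeff (R := ℤ_[p]) uv.1 a * PowerSeries.coeff (R := ℤ_[p]) uv.2 (PowerSeries.mk
        fun i => ∑' k, PowerSeries.coeff (R := ℤ_[p]) i (F k)) =
      ∑' k, PowerSeries.coeff (R := ℤ_[p]) uv.1 a * PowerSeries.coeff (R := ℤ_[p]) uv.2 (F k) := by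
    intro uv _
    rw [PowerSeries.coeff_mk]
    exact (Summable.tsum_mul_left _ (hF uv.2)).symm
  rw [Finset.sum_congr rfl step1, ← Summable.tsum_finsetSum (fun uv _ => ((hF uv.2).mul_left _))]
  exact tsum_congr fun k => (PowerSeries.coeff_mul j a (F k)).symm

variable (c : ℕ → IwasawaAlgebra p)

/-- `e_n = ∑_{k≥0} d_{n,k} c_{n+k}`. -/
def eSeries (n : ℕ) : IwasawaAlgebra p :=
  SumSeries p fun k => dfac p n k * c (n + k)

theorem eSeries_summable (n j : ℕ) :
    Summable fun k => PowerSeries.coeff (R := ℤ_[p]) j (dfac p n k * c (n + k)) :=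
  summable_coeff_of_mem_pow p (fun k => Ideal.mul_mem_right _ _ (dfac_mem p n k)) j

theorem eSeries_rec (n : ℕ) :
    eSeries p c n = c n + rho p n * eSeries p c (n + 1) := by
  rw [eSeries, eSeries, mul_SumSeries p _ _ (eSeries_summable p c (n+1))]
  ext j
  rw [SumSeries, SumSeries, PowerSeries.coeff_mk, map_add, PowerSeries.coeff_mk,
    Summable.tsum_eq_zero_add (eSeries_summable p c n j)]
  congr 1
  · rw [dfac_zero, one_mul, Nat.add_zero]
  · refine tsum_congr fun k => ?_
    rw [dfac_succ', mul_assoc]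
    have : n + (k + 1) = n + 1 + k := by omega
    rw [this]

/-- `s_n = ω_n e_n = ∑_{k≥n} ω_k c_k`. -/
def sSeries (n : ℕ) : IwasawaAlgebra p := omegaN p n * eSeries p c n

theorem sSeries_rec (n : ℕ) :
    sSeries p c n = omegaN p n * c n + sSeries p c (n + 1) := by
  rw [sSeries, sSeries, eSeries_rec p c n, mul_add, omega_succ_eq, mul_assoc]

theorem sSeries_prefix (n : ℕ) :
    sSeries p c 0 = (∑ k ∈ Finset.range n, omegaN p k * c k) + sSeries p c n := by
  induction n with
  | zero => rw [Finset.range_zero, Finset.sum_empty, zero_add]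
  | succ n ih =>
    rw [ih, Finset.sum_range_succ, sSeries_rec p c n]
    ring

end Sums

end IwasawaAux

theorem exists_functional {R : Type*} [CommRing R] [IsDomain R] {N : Type*} [AddCommGroup N]
    [Module R N] [Module.Finite R N]
    (htf : ∀ (a : R) (y : N), a • y = 0 → a = 0 ∨ y = 0)
    {x : N} (hx : x ≠ 0) : ∃ θ : N →ₗ[R] R, θ x ≠ 0 := by
  classical
  set S := nonZeroDivisors R
  let K := FractionRing R
  let V := LocalizedModule S N
  let j : N →ₗ[R] V := LocalizedModule.mkLinearMap S N
  have hj : j x ≠ 0 := by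
    intro h
    have h0 : LocalizedModule.mk x (1 : S) = LocalizedModule.mk (0 : N) (1 : S) := by
      rw [LocalizedModule.zero_mk]
      exact h
    obtain ⟨u, hu⟩ := LocalizedModule.mk_eq.mp h0
    simp only [one_smul, smul_zero] at hu
    rcases htf (u : R) x hu with h1 | h1
    · exact nonZeroDivisors.ne_zero u.2 h1
    · exact hx h1
  let b := Module.Basis.ofVectorSpace K V
  have hrepr : b.repr (j x) ≠ 0 := fun h => hj (b.repr.map_eq_zero_iff.mp h)
  obtain ⟨i, hi⟩ := Finsupp.ne_iff.mp hrepr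
  rw [Finsupp.coe_zero, Pi.zero_apply] at hi
  let lam : V →ₗ[K] K := b.coord i
  obtain ⟨n, s, hs⟩ := Module.Finite.exists_fin (R := R) (M := N)
  obtain ⟨dd, hdd⟩ := IsLocalization.exist_integer_multiples S Finset.univ
    (fun i : Fin n => lam (j (s i)))
  let θ₀ : N →ₗ[R] K := (dd : R) • ((lam.restrictScalars R).comp j)
  let A : Submodule R K := LinearMap.range (Algebra.linearMap R K)
  have hrange : ∀ y, θ₀ y ∈ A := by
    intro y
    have hy : y ∈ Submodule.span R (Set.range s) := hs ▸ Submodule.mem_top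
    induction hy using Submodule.span_induction with
    | mem z hz =>
      obtain ⟨i', rfl⟩ := hz
      obtain ⟨r, hr⟩ := hdd i' (Finset.mem_univ i')
      exact ⟨r, hr⟩
    | zero => rw [map_zero]; exact Submodule.zero_mem A
    | add y z _ _ hy hz => rw [map_add]; exact Submodule.add_mem A hy hz
    | smul r y _ hy => rw [map_smul]; exact Submodule.smul_mem A r hy
  let e : R ≃ₗ[R] A := LinearEquiv.ofInjective (Algebra.linearMap R K)
    (IsFractionRing.injective R K)
  refine ⟨e.symm.toLinearMap.comp (θ₀.codRestrict A hrange), ?_⟩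
  intro h
  have h2 : θ₀.codRestrict A hrange x = 0 := by
    have := congrArg e h
    rwa [LinearMap.comp_apply, LinearEquiv.coe_toLinearMap, e.apply_symm_apply, map_zero] at this
  have h3 : θ₀ x = 0 := by
    have := congrArg (Subtype.val) h2
    simpa using this
  have h4 : θ₀ x = algebraMap R K (dd : R) * lam (j x) := by
    simp only [θ₀, LinearMap.smul_apply, LinearMap.comp_apply, LinearMap.coe_restrictScalars]
    rw [Algebra.smul_def]
  rw [h4] at h3
  rcases mul_eq_zero.mp h3 with h5 | h5
  · exact (map_ne_zero_iff _ (IsFractionRing.injective R K)).mpr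
      (nonZeroDivisors.ne_zero dd.2) h5
  · have : lam (j x) = b.repr (j x) i := b.coord_apply i (j x)
    rw [this] at h5
    exact hi h5


end AuxSection

variable (p : ℕ) [Fact p.Prime] (M : Type*) [AddCommGroup M]
  [Module (IwasawaAlgebra p) M]

/-- The submodule `ω_n M` of `M`. -/
def omegaSub (n : ℕ) : Submodule (IwasawaAlgebra p) M :=
  Ideal.span {omegaN p n} • (⊤ : Submodule (IwasawaAlgebra p) M)

/-- The `ℤ_p`-torsion submodule of a `Λ`-module `N`: elements annihilated by some
nonzero element of `ℤ_p` (viewed inside `Λ` via the constants). -/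
def torsionZp (N : Type*) [AddCommGroup N] [Module (IwasawaAlgebra p) N] :
    Submodule (IwasawaAlgebra p) N where
  carrier := {x | ∃ a : ℤ_[p], a ≠ 0 ∧ ((PowerSeries.C : ℤ_[p] →+* PowerSeries ℤ_[p]) a) • x = 0}
  zero_mem' := ⟨1, one_ne_zero, smul_zero _⟩
  add_mem' := by
    rintro x y ⟨a, ha, hax⟩ ⟨b, hb, hby⟩
    refine ⟨a * b, mul_ne_zero ha hb, ?_⟩
    have h1 : ((PowerSeries.C : ℤ_[p] →+* PowerSeries ℤ_[p]) a * (PowerSeries.C : ℤ_[p] →+* PowerSeries ℤ_[p]) b) • x = 0 := by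
      rw [mul_comm, mul_smul, hax, smul_zero]
    have h2 : ((PowerSeries.C : ℤ_[p] →+* PowerSeries ℤ_[p]) a * (PowerSeries.C : ℤ_[p] →+* PowerSeries ℤ_[p]) b) • y = 0 := by
      rw [mul_smul, hby, smul_zero]
    rw [map_mul, smul_add, h1, h2, add_zero]
  smul_mem' := by
    rintro r x ⟨a, ha, hax⟩
    refine ⟨a, ha, ?_⟩
    rw [smul_smul, mul_comm, ← smul_smul, hax, smul_zero]

/-- The natural projection `M/ω_{n+1}M → M/ω_n M`. -/
def projN (n : ℕ) :
    (M ⧸ omegaSub p M (n + 1)) →ₗ[IwasawaAlgebra p] (M ⧸ omegaSub p M n) :=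
  Submodule.mapQ _ _ LinearMap.id (by
    rw [Submodule.comap_id]
    apply Submodule.smul_mono_left
    rw [Ideal.span_singleton_le_span_singleton]
    exact omegaN_dvd_succ p n)

/-- The inverse limit `lim_n t_{ℤ_p}(M/ω_n M)` of the `ℤ_p`-torsion submodules of the
quotients `M/ω_n M`, taken along the natural projections, realized as the
`Λ`-submodule of compatible families in the product. -/
def limTorsionZp :
    Submodule (IwasawaAlgebra p) (Π n : ℕ, torsionZp p (M ⧸ omegaSub p M n)) where
  carrier := {x | ∀ n : ℕ,
    projN p M n ((x (n + 1) : M ⧸ omegaSub p M (n + 1))) =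
      (x n : M ⧸ omegaSub p M n)}
  zero_mem' := by intro n; simp
  add_mem' := by
    intro x y hx hy n
    simp only [Pi.add_apply, Submodule.coe_add, map_add, hx n, hy n]
  smul_mem' := by
    intro r x hx n
    simp only [Pi.smul_apply, Submodule.coe_smul, map_smul, hx n]

section MainHelpers

theorem mem_omegaSub_iff {n : ℕ} {x : M} :
    x ∈ omegaSub p M n ↔ ∃ y : M, omegaN p n • y = x := by
  rw [omegaSub, Submodule.ideal_span_singleton_smul]
  constructor
  · intro h
    obtain ⟨y, -, hy⟩ := Set.mem_smul_set.mp h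
    exact ⟨y, hy⟩
  · rintro ⟨y, rfl⟩
    exact Submodule.smul_mem_pointwise_smul y _ ⊤ Submodule.mem_top

theorem omega_smul_mem_omegaSub (n : ℕ) (y : M) : omegaN p n • y ∈ omegaSub p M n :=
  (mem_omegaSub_iff p M).mpr ⟨y, rfl⟩

universe vM in
theorem eq_zero_of_mem_all_omegaSubU {M' : Type vM} [AddCommGroup M']
    [Module (IwasawaAlgebra p) M'] [Module.Finite (IwasawaAlgebra p) M'] {x : M'}
    (h : ∀ n, ∃ y : M', omegaN p n • y = x) : x = 0 := by
  classical
  let e : ULift.{vM} (IwasawaAlgebra p) ≃+* IwasawaAlgebra p := ULift.ringEquiv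
  letI : Module (ULift.{vM} (IwasawaAlgebra p)) M' := Module.compHom M' e.toRingHom
  haveI : IsNoetherianRing (ULift.{vM} (IwasawaAlgebra p)) :=
    isNoetherianRing_of_surjective _ _ e.symm.toRingHom e.symm.surjective
  haveI : IsLocalRing (ULift.{vM} (IwasawaAlgebra p)) :=
    IsLocalRing.of_surjective' e.symm.toRingHom e.symm.surjective
  haveI : Module.Finite (ULift.{vM} (IwasawaAlgebra p)) M' := by
    obtain ⟨s, hs⟩ := Module.Finite.fg_top (R := IwasawaAlgebra p) (M := M')
    refine ⟨⟨s, ?_⟩⟩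
    rw [eq_top_iff]
    intro y hy0
    clear hy0
    have hy : y ∈ Submodule.span (IwasawaAlgebra p) (s : Set M') := by rw [hs]; trivial
    induction hy using Submodule.span_induction with
    | mem z hz => exact Submodule.subset_span hz
    | zero => exact Submodule.zero_mem _
    | add a b _ _ ha hb => exact Submodule.add_mem _ ha hb
    | smul r z _ hz =>
      show (ULift.up r) • z ∈ _
      exact Submodule.smul_mem _ _ hz
  set I' : Ideal (ULift.{vM} (IwasawaAlgebra p)) :=
    Ideal.map e.symm.toRingHom (IwasawaAux.PI p) with hI'
  have hI'top : I' ≠ ⊤ := by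
    intro htop
    have h1 : Ideal.map e.toRingHom I' = ⊤ := by rw [htop, Ideal.map_top]
    rw [hI', Ideal.map_map] at h1
    have h2 : (e.toRingHom.comp e.symm.toRingHom) = RingHom.id _ := by
      ext z
      simp
    rw [h2, Ideal.map_id] at h1
    exact IwasawaAux.PI_ne_top p h1
  have hbot := Ideal.iInf_pow_smul_eq_bot_of_isLocalRing (M := M') I' hI'top
  have hx : x ∈ (⊥ : Submodule (ULift.{vM} (IwasawaAlgebra p)) M') := by
    rw [← hbot, Submodule.mem_iInf]
    intro i
    obtain ⟨y, hy⟩ := h i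
    have hmem : (ULift.up (omegaN p i) : ULift.{vM} (IwasawaAlgebra p)) ∈ I' ^ i := by
      rw [hI', ← Ideal.map_pow]
      exact Ideal.mem_map_of_mem _
        (Ideal.pow_le_pow_right (by omega) (IwasawaAux.omegaN_mem_PI_pow p i))
    have hxy : x = (ULift.up (omegaN p i) : ULift.{vM} (IwasawaAlgebra p)) • y := by
      rw [← hy]; rfl
    rw [hxy]
    exact AddSubmonoid.smul_mem_smul hmem (Submodule.mem_top (R := ULift.{vM} (IwasawaAlgebra p)))
  simpa using hx

theorem eq_zero_of_mem_all_omegaSub [Module.Finite (IwasawaAlgebra p) M] {x : M}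
    (h : ∀ n, x ∈ omegaSub p M n) : x = 0 :=
  eq_zero_of_mem_all_omegaSubU p (fun n => (mem_omegaSub_iff p M).mp (h n))

theorem mk_torsion_mem_torsionZp
    (hfin : ∀ n : ℕ, Finite
      ((Submodule.torsion (IwasawaAlgebra p) M) ⧸
        (Ideal.span {omegaN p n} • (⊤ : Submodule (IwasawaAlgebra p)
          (Submodule.torsion (IwasawaAlgebra p) M)))))
    (x : M) (hx : x ∈ Submodule.torsion (IwasawaAlgebra p) M) (n : ℕ) :
    Submodule.Quotient.mk (p := omegaSub p M n) x ∈ torsionZp p (M ⧸ omegaSub p M n) := by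
  classical
  set T := Submodule.torsion (IwasawaAlgebra p) M with hT
  set Tim : Submodule (IwasawaAlgebra p) (M ⧸ omegaSub p M n) :=
    Submodule.map (omegaSub p M n).mkQ T with hTim
  let ψ₀ : T →ₗ[IwasawaAlgebra p] Tim :=
    LinearMap.codRestrict Tim ((omegaSub p M n).mkQ.comp T.subtype)
      (fun t => ⟨(t : M), t.2, rfl⟩)
  have hker : (Ideal.span {omegaN p n} • (⊤ : Submodule (IwasawaAlgebra p) T)) ≤
      LinearMap.ker ψ₀ := by
    intro y hy
    have hyM : (y : M) ∈ omegaSub p M n := by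
      have h2 : Submodule.map T.subtype (Ideal.span {omegaN p n} • ⊤) ≤ omegaSub p M n := by
        rw [Submodule.map_smul'', omegaSub]
        exact Submodule.smul_mono le_rfl le_top
      exact h2 ⟨y, hy, rfl⟩
    rw [LinearMap.mem_ker]
    apply Subtype.ext
    show Submodule.Quotient.mk (y : M) = 0
    rw [Submodule.Quotient.mk_eq_zero]
    exact hyM
  let ψ := Submodule.liftQ _ ψ₀ hker
  have hsurj : Function.Surjective ψ := by
    rintro ⟨z, w, hw, rfl⟩
    exact ⟨Submodule.Quotient.mk ⟨w, hw⟩, Subtype.ext rfl⟩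
  haveI : Finite
      (T ⧸ (Ideal.span {omegaN p n} • (⊤ : Submodule (IwasawaAlgebra p) T))) := hfin n
  haveI hTimFin : Finite Tim := Finite.of_surjective ψ hsurj
  haveI : Fintype Tim := Fintype.ofFinite Tim
  set k := Fintype.card Tim with hk
  have hkpos : 0 < k := Fintype.card_pos
  refine ⟨(k : ℤ_[p]), Nat.cast_ne_zero.mpr hkpos.ne', ?_⟩
  have h1 : k • (⟨Submodule.Quotient.mk x, ⟨x, hx, rfl⟩⟩ : Tim) = 0 := card_nsmul_eq_zero
  have h2 : k • (Submodule.Quotient.mk x : M ⧸ omegaSub p M n) = 0 := by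
    have h3 : ((k • (⟨Submodule.Quotient.mk x, ⟨x, hx, rfl⟩⟩ : Tim) : Tim) : M ⧸ omegaSub p M n)
        = k • (Submodule.Quotient.mk x : M ⧸ omegaSub p M n) := rfl
    rw [← h3, h1, ZeroMemClass.coe_zero]
  calc (PowerSeries.C (R := ℤ_[p]) (k : ℤ_[p])) • (Submodule.Quotient.mk x : M ⧸ omegaSub p M n)
      = ((k : ℕ) : IwasawaAlgebra p) • (Submodule.Quotient.mk x : M ⧸ omegaSub p M n) := by
        rw [map_natCast (PowerSeries.C (R := ℤ_[p])) k]
    _ = k • (Submodule.Quotient.mk x : M ⧸ omegaSub p M n) := by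
        rw [Nat.cast_smul_eq_nsmul]
    _ = 0 := h2

end MainHelpers

set_option synthInstance.maxHeartbeats 800000 in
set_option maxHeartbeats 1600000 in
/-- **Lemma 3.3.** Let `M` be a finitely generated `Λ`-module such that
`t_Λ(M)/ω_n·t_Λ(M)` is finite for every `n`. Then the natural maps `M → M/ω_n M`
induce an isomorphism of `Λ`-modules `t_Λ(M) ≅ lim_n t_{ℤ_p}(M/ω_n M)`. -/
theorem torsion_iso_limit_torsion
    [Module.Finite (IwasawaAlgebra p) M]
    (hfin : ∀ n : ℕ, Finite
      ((Submodule.torsion (IwasawaAlgebra p) M) ⧸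
        (Ideal.span {omegaN p n} • (⊤ : Submodule (IwasawaAlgebra p)
          (Submodule.torsion (IwasawaAlgebra p) M))))) :
    ∃ e : Submodule.torsion (IwasawaAlgebra p) M ≃ₗ[IwasawaAlgebra p]
        limTorsionZp p M,
      ∀ (x : Submodule.torsion (IwasawaAlgebra p) M) (n : ℕ),
        (((e x : Π n : ℕ, torsionZp p (M ⧸ omegaSub p M n)) n :
            torsionZp p (M ⧸ omegaSub p M n)) : M ⧸ omegaSub p M n) =
          Submodule.Quotient.mk (x : M) := by
  classical
  -- the forward linear map
  let comp0 : ∀ n, Submodule.torsion (IwasawaAlgebra p) M →ₗ[IwasawaAlgebra p]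
      torsionZp p (M ⧸ omegaSub p M n) := fun n =>
    LinearMap.codRestrict (torsionZp p (M ⧸ omegaSub p M n))
      ((omegaSub p M n).mkQ.comp (Submodule.torsion (IwasawaAlgebra p) M).subtype)
      (fun x => mk_torsion_mem_torsionZp p M hfin (x : M) x.2 n)
  let Ψ : Submodule.torsion (IwasawaAlgebra p) M →ₗ[IwasawaAlgebra p]
      (Π n : ℕ, torsionZp p (M ⧸ omegaSub p M n)) := LinearMap.pi comp0
  have hΨ : ∀ x, Ψ x ∈ limTorsionZp p M := by
    intro x n
    show projN p M n (Submodule.Quotient.mk (x : M)) = Submodule.Quotient.mk (x : M)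
    rw [projN, Submodule.mapQ_apply, LinearMap.id_apply]
  let Φ := Ψ.codRestrict (limTorsionZp p M) hΨ
  -- injectivity
  have hker : ∀ x, Φ x = 0 → x = 0 := by
    intro x hx
    have hcomp : ∀ n, (x : M) ∈ omegaSub p M n := by
      intro n
      have h1 : ((((Φ x) : Π n : ℕ, torsionZp p (M ⧸ omegaSub p M n)) n :
          torsionZp p (M ⧸ omegaSub p M n)) : M ⧸ omegaSub p M n) = 0 := by
        rw [hx]; rfl
      have h2 : (Submodule.Quotient.mk (x : M) : M ⧸ omegaSub p M n) = 0 := h1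
      rwa [Submodule.Quotient.mk_eq_zero] at h2
    exact Subtype.ext (eq_zero_of_mem_all_omegaSub p M hcomp)
  have hinj : Function.Injective Φ := by
    intro x y hxy
    have := hker (x - y) (by rw [map_sub, hxy, sub_self])
    rwa [sub_eq_zero] at this
  -- surjectivity
  have hsurj : Function.Surjective Φ := by
    rintro ⟨yv, hyv⟩
    have hmex : ∀ n, ∃ m : M, Submodule.Quotient.mk m = ((yv n : torsionZp p
        (M ⧸ omegaSub p M n)) : M ⧸ omegaSub p M n) :=
      fun n => Submodule.Quotient.mk_surjective _ _
    choose m hm using hmex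
    have hdiff : ∀ n, ∃ u : M, omegaN p n • u = m (n+1) - m n := by
      intro n
      refine (mem_omegaSub_iff p M).mp ?_
      rw [← Submodule.Quotient.eq]
      have h1 : (Submodule.Quotient.mk (m (n+1)) : M ⧸ omegaSub p M n)
          = ((yv n : torsionZp p (M ⧸ omegaSub p M n)) : M ⧸ omegaSub p M n) := by
        rw [← hyv n, ← hm (n+1), projN, Submodule.mapQ_apply, LinearMap.id_apply]
      rw [h1, ← hm n]
    choose u hu using hdiff
    obtain ⟨r, g, hg⟩ := Module.Finite.exists_fin (R := IwasawaAlgebra p) (M := M)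
    have hcoordex : ∀ n, ∃ c : Fin r → IwasawaAlgebra p, (∑ i, c i • g i) = u n := by
      intro n
      have : u n ∈ Submodule.span (IwasawaAlgebra p) (Set.range g) := by rw [hg]; trivial
      exact (Submodule.mem_span_range_iff_exists_fun _).mp this
    choose c hc using hcoordex
    let cc : Fin r → ℕ → IwasawaAlgebra p := fun i n => c n i
    set mf : M := m 0 + ∑ i, (IwasawaAux.sSeries p (cc i) 0) • g i with hmf
    -- the key identity
    have hkey : ∀ n, mf - m n = ∑ i, (IwasawaAux.sSeries p (cc i) n) • g i := by
      intro n
      have htel : (∑ k ∈ Finset.range n, omegaN p k • u k) = m n - m 0 := by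
        rw [← Finset.sum_range_sub (fun k => m k) n]
        exact Finset.sum_congr rfl fun k _ => hu k
      have hsplit : ∀ i : Fin r, (IwasawaAux.sSeries p (cc i) 0) • g i
          = (∑ k ∈ Finset.range n, omegaN p k * cc i k) • g i
            + (IwasawaAux.sSeries p (cc i) n) • g i := by
        intro i
        rw [← add_smul, ← IwasawaAux.sSeries_prefix]
      have hswap : (∑ i, (∑ k ∈ Finset.range n, omegaN p k * cc i k) • g i)
          = ∑ k ∈ Finset.range n, omegaN p k • u k := by
        simp_rw [Finset.sum_smul]
        rw [Finset.sum_comm]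
        refine Finset.sum_congr rfl fun k _ => ?_
        rw [← hc k, Finset.smul_sum]
        exact Finset.sum_congr rfl fun i _ => (smul_smul _ _ _).symm
      calc mf - m n
          = (∑ i, (IwasawaAux.sSeries p (cc i) 0) • g i) - (m n - m 0) := by
            rw [hmf]; abel
        _ = (∑ i, ((∑ k ∈ Finset.range n, omegaN p k * cc i k) • g i
              + (IwasawaAux.sSeries p (cc i) n) • g i)) - (m n - m 0) := by
            rw [Finset.sum_congr rfl fun i _ => hsplit i]
        _ = ((∑ i, (∑ k ∈ Finset.range n, omegaN p k * cc i k) • g i)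
              + ∑ i, (IwasawaAux.sSeries p (cc i) n) • g i) - (m n - m 0) := by
            rw [Finset.sum_add_distrib]
        _ = ∑ i, (IwasawaAux.sSeries p (cc i) n) • g i := by
            rw [hswap, htel]; abel
    have hmem : ∀ n, mf - m n ∈ omegaSub p M n := by
      intro n
      rw [hkey n]
      refine Submodule.sum_mem _ fun i _ => ?_
      rw [IwasawaAux.sSeries, mul_smul]
      exact omega_smul_mem_omegaSub p M n _
    have hmk : ∀ n, (Submodule.Quotient.mk mf : M ⧸ omegaSub p M n)
        = ((yv n : torsionZp p (M ⧸ omegaSub p M n)) : M ⧸ omegaSub p M n) := by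
      intro n
      rw [← hm n]
      exact (Submodule.Quotient.eq _).mpr (hmem n)
    -- `mf` is a torsion element
    have htor : mf ∈ Submodule.torsion (IwasawaAlgebra p) M := by
      by_contra hmft
      have hne : (Submodule.Quotient.mk mf :
          M ⧸ Submodule.torsion (IwasawaAlgebra p) M) ≠ 0 := by
        rwa [ne_eq, Submodule.Quotient.mk_eq_zero]
      have htf : ∀ (a : IwasawaAlgebra p)
          (y : M ⧸ Submodule.torsion (IwasawaAlgebra p) M),
          a • y = 0 → a = 0 ∨ y = 0 := fun a y h => smul_eq_zero.mp h
      obtain ⟨θ, hθ⟩ := exists_functional htf hne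
      set gθ := θ (Submodule.Quotient.mk mf) with hgθ
      have hdvd : ∀ n, omegaN p n ∣ gθ := by
        intro n
        obtain ⟨a, ha0, ha⟩ := (yv n).2
        have h1 : (PowerSeries.C (R := ℤ_[p]) a) • mf ∈ omegaSub p M n := by
          rw [← Submodule.Quotient.mk_eq_zero, Submodule.Quotient.mk_smul, hmk n, ha]
        obtain ⟨v, hv⟩ := (mem_omegaSub_iff p M).mp h1
        have h2 : (PowerSeries.C (R := ℤ_[p]) a) •
            (Submodule.Quotient.mk mf : M ⧸ Submodule.torsion (IwasawaAlgebra p) M)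
            = omegaN p n • (Submodule.Quotient.mk v) := by
          rw [← Submodule.Quotient.mk_smul, ← Submodule.Quotient.mk_smul, hv]
        have h3 : (PowerSeries.C (R := ℤ_[p]) a) * gθ
            = omegaN p n * θ (Submodule.Quotient.mk v) := by
          rw [hgθ, ← smul_eq_mul, ← smul_eq_mul, ← map_smul, ← map_smul, h2]
        have h4 : omegaN p n ∣ (PowerSeries.C (R := ℤ_[p]) a) * gθ := Dvd.intro _ h3.symm
        have hCa : (PowerSeries.C (R := ℤ_[p]) a)
            = (PowerSeries.C (R := ℤ_[p]) ((PadicInt.unitCoeff ha0 : ℤ_[p]ˣ) : ℤ_[p]))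
              * (p : IwasawaAlgebra p) ^ (a.valuation) := by
          nth_rewrite 1 [PadicInt.unitCoeff_spec ha0]
          rw [map_mul, map_pow, ← IwasawaAux.p_cast_eq_C]
        have hunit : IsUnit (PowerSeries.C (R := ℤ_[p]) ((PadicInt.unitCoeff ha0 : ℤ_[p]ˣ) : ℤ_[p])) :=
          (PadicInt.unitCoeff ha0).isUnit.map (PowerSeries.C (R := ℤ_[p]))
        have h5 : omegaN p n ∣ (p : IwasawaAlgebra p) ^ (a.valuation) * gθ := by
          refine (IsUnit.dvd_mul_left hunit).mp ?_
          have : (PowerSeries.C (R := ℤ_[p]) ((PadicInt.unitCoeff ha0 : ℤ_[p]ˣ) : ℤ_[p]))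
              * ((p : IwasawaAlgebra p) ^ (a.valuation) * gθ)
              = (PowerSeries.C (R := ℤ_[p]) a) * gθ := by
            rw [hCa]; ring
          rw [this]
          exact h4
        exact IwasawaAux.omegaN_dvd_of_p_pow_mul p n _ gθ h5
      exact hθ (IwasawaAux.eq_zero_of_forall_omegaN_dvd p gθ hdvd)
    refine ⟨⟨mf, htor⟩, ?_⟩
    apply Subtype.ext
    funext n
    apply Subtype.ext
    exact hmk n
  exact ⟨LinearEquiv.ofBijective Φ ⟨hinj, hsurj⟩, fun x n => rfl⟩

end
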